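/- For an r-dimensional lattice simplex P with vertices v_0,...,v_r (linearly independent lattice vectors in R^m) and any nonnegative integer n, the number of lattice points in the closed parallelepiped n·◊P equals the sum over all faces F of P (including the empty face) of n^(dim F + 1) times the number of lattice points in the half-open parallelepiped Π(F). -/

import Mathlib

open Finset

section Aux

variable {m r : ℕ} (v : Fin (r + 1) → Fin m → ℤ)

/-- `lam` represents an integral point: each coordinate of `∑ lam i • v i` is an integer. -/
private def Intg (lam : Fin (r + 1) → ℝ) : Prop :=
  ∀ j, ∃ z : ℤ, (z : ℝ) = ∑ i, lam i * (v i j : ℝ)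

/-- The integer point represented by `lam` (when `Intg v lam`). -/
private noncomputable def fmap (lam : Fin (r + 1) → ℝ) : Fin m → ℤ :=
  fun j => round (∑ i, lam i * (v i j : ℝ))

private lemma fmap_spec {lam : Fin (r + 1) → ℝ} (h : Intg v lam) (j : Fin m) :
    (fmap v lam j : ℝ) = ∑ i, lam i * (v i j : ℝ) := by
  obtain ⟨z, hz⟩ := h j
  simp only [fmap, ← hz, round_intCast]

private lemma lam_unique (hv : LinearIndependent ℝ (fun i => fun j => (v i j : ℝ)))
    {lam lam' : Fin (r + 1) → ℝ}
    (h : ∀ j, ∑ i, lam i * (v i j : ℝ) = ∑ i, lam' i * (v i j : ℝ)) : lam = lam' := by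
  rw [Fintype.linearIndependent_iff] at hv
  have key : ∀ i, lam i - lam' i = 0 := by
    apply hv (fun i => lam i - lam' i)
    funext j
    have := h j
    simp only [Finset.sum_apply, Pi.smul_apply, smul_eq_mul, Pi.zero_apply, sub_mul,
      Finset.sum_sub_distrib]
    linarith
  funext i
  have := key i
  linarith

private lemma set_transfer (P : (Fin (r + 1) → ℝ) → Prop) :
    {x : Fin m → ℤ | ∃ lam : Fin (r + 1) → ℝ,
        P lam ∧ ∀ j, (x j : ℝ) = ∑ i, lam i * (v i j : ℝ)}
      = fmap v '' {lam | P lam ∧ Intg v lam} := by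
  ext x
  constructor
  · rintro ⟨lam, hP, hrep⟩
    refine ⟨lam, ⟨hP, fun j => ⟨x j, hrep j⟩⟩, ?_⟩
    funext j
    have : (fmap v lam j : ℝ) = (x j : ℝ) := by
      rw [fmap_spec v (fun j => ⟨x j, hrep j⟩) j, hrep j]
    exact_mod_cast this
  · rintro ⟨lam, ⟨hP, hint⟩, rfl⟩
    exact ⟨lam, hP, fun j => fmap_spec v hint j⟩

private lemma card_transfer (hv : LinearIndependent ℝ (fun i => fun j => (v i j : ℝ)))
    (P : (Fin (r + 1) → ℝ) → Prop) :
    Set.ncard {x : Fin m → ℤ | ∃ lam : Fin (r + 1) → ℝ,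
        P lam ∧ ∀ j, (x j : ℝ) = ∑ i, lam i * (v i j : ℝ)}
      = Set.ncard {lam | P lam ∧ Intg v lam} := by
  rw [set_transfer v P]
  apply Set.ncard_image_of_injOn
  rintro lam ⟨-, hint⟩ lam' ⟨-, hint'⟩ hfe
  refine lam_unique v hv (fun j => ?_)
  rw [← fmap_spec v hint j, ← fmap_spec v hint' j, hfe]

/-- Integral points with bounded coefficients form a finite set. -/
private lemma finite_bounded (hv : LinearIndependent ℝ (fun i => fun j => (v i j : ℝ)))
    (C : ℝ) :
    {lam : Fin (r + 1) → ℝ | (∀ i, 0 ≤ lam i ∧ lam i ≤ C) ∧ Intg v lam}.Finite := by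
  set R : ℝ := C * ∑ i, ∑ j, |(v i j : ℝ)| with hR
  have himg : fmap v '' {lam | (∀ i, 0 ≤ lam i ∧ lam i ≤ C) ∧ Intg v lam}
      ⊆ Set.pi Set.univ (fun _ : Fin m => Set.Icc (-⌈R⌉) ⌈R⌉) := by
    rintro x ⟨lam, ⟨hb, hint⟩, rfl⟩ j -
    have hC0 : 0 ≤ C := le_trans (hb 0).1 (hb 0).2
    have hxj : |(fmap v lam j : ℝ)| ≤ R := by
      rw [fmap_spec v hint j]
      refine le_trans (Finset.abs_sum_le_sum_abs (fun i => lam i * (v i j : ℝ)) Finset.univ) ?_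
      have hstep : ∑ i, |lam i * (v i j : ℝ)| ≤ ∑ i, C * ∑ j', |(v i j' : ℝ)| := by
        apply Finset.sum_le_sum
        intro i _
        rw [abs_mul]
        have h1 : |lam i| ≤ C := by rw [abs_of_nonneg (hb i).1]; exact (hb i).2
        have h2 : |(v i j : ℝ)| ≤ ∑ j', |(v i j' : ℝ)| :=
          Finset.single_le_sum (f := fun j' => |(v i j' : ℝ)|)
            (fun j' _ => abs_nonneg _) (Finset.mem_univ j)
        exact mul_le_mul h1 h2 (abs_nonneg _) hC0
      rw [hR, Finset.mul_sum]
      exact hstep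
    have habs : |fmap v lam j| ≤ ⌈R⌉ := by
      have h1 : ((|fmap v lam j| : ℤ) : ℝ) ≤ ((⌈R⌉ : ℤ) : ℝ) := by
        push_cast
        exact le_trans hxj (Int.le_ceil R)
      exact_mod_cast h1
    exact abs_le.mp habs
  have hfin : (fmap v '' {lam | (∀ i, 0 ≤ lam i ∧ lam i ≤ C) ∧ Intg v lam}).Finite :=
    Set.Finite.subset (Set.Finite.pi (fun _ => Set.finite_Icc _ _)) himg
  apply Set.Finite.of_finite_image hfin
  rintro lam ⟨-, hint⟩ lam' ⟨-, hint'⟩ hfe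
  refine lam_unique v hv (fun j => ?_)
  rw [← fmap_spec v hint j, ← fmap_spec v hint' j, hfe]

end Aux

/-- For an `r`-dimensional lattice simplex `P = ⟨v_0,…,v_r⟩` spanned by
linearly independent lattice vectors in `ℝ^m` and every `n ≥ 0`, the number
of lattice points in the closed parallelepiped `n·◊P` equals the sum, over
all faces `F` of `P` (including the empty face, encoded as subsets
`F ⊆ {0,…,r}`), of `n^{dim F + 1}` times the number of lattice points in the
half-open parallelepiped `Π(F)`. -/
theorem lattice_points_dilated_parallelepiped (m r : ℕ)
    (v : Fin (r + 1) → Fin m → ℤ)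
    (hv : LinearIndependent ℝ (fun i => fun j => (v i j : ℝ))) (n : ℕ) :
    Set.ncard {x : Fin m → ℤ | ∃ lam : Fin (r + 1) → ℝ,
        (∀ i, 0 ≤ lam i ∧ lam i ≤ (n : ℝ)) ∧
        ∀ j, (x j : ℝ) = ∑ i, lam i * (v i j : ℝ)}
      = ∑ F : Finset (Fin (r + 1)), n ^ F.card *
          Set.ncard {x : Fin m → ℤ | ∃ lam : Fin (r + 1) → ℝ,
            (∀ i, 0 ≤ lam i ∧ lam i < 1) ∧ (∀ i ∉ F, lam i = 0) ∧
            ∀ j, (x j : ℝ) = ∑ i, lam i * (v i j : ℝ)} := by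
  classical
  -- Transfer both sides from sets of integer points to sets of coefficient vectors.
  have hL := card_transfer v hv (fun lam => ∀ i, 0 ≤ lam i ∧ lam i ≤ (n : ℝ))
  have hRF : ∀ F : Finset (Fin (r + 1)),
      Set.ncard {x : Fin m → ℤ | ∃ lam : Fin (r + 1) → ℝ,
          (∀ i, 0 ≤ lam i ∧ lam i < 1) ∧ (∀ i ∉ F, lam i = 0) ∧
          ∀ j, (x j : ℝ) = ∑ i, lam i * (v i j : ℝ)}
        = Set.ncard {lam : Fin (r + 1) → ℝ |
            ((∀ i, 0 ≤ lam i ∧ lam i < 1) ∧ (∀ i ∉ F, lam i = 0)) ∧ Intg v lam} := by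
    intro F
    rw [← card_transfer v hv (fun lam => (∀ i, 0 ≤ lam i ∧ lam i < 1) ∧ (∀ i ∉ F, lam i = 0))]
    congr 1
    ext x
    simp only [Set.mem_setOf_eq, and_assoc]
  rw [hL]
  simp only [hRF]
  -- The full half-open parallelepiped coefficient set.
  set Λfull : Set (Fin (r + 1) → ℝ) :=
    {μ | (∀ i, 0 ≤ μ i ∧ μ i < 1) ∧ Intg v μ} with hΛfull_def
  have hΛfull : Λfull.Finite := by
    apply (finite_bounded v hv ((n : ℝ) + 1)).subset
    rintro μ ⟨hb, hint⟩
    exact ⟨fun i => ⟨(hb i).1, le_trans (hb i).2.le (by have : (0:ℝ) ≤ (n:ℝ) := Nat.cast_nonneg n; linarith)⟩, hint⟩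
  set T : Finset (Fin (r + 1) → ℝ) := hΛfull.toFinset with hT_def
  -- Each summand on the RHS is the number of μ ∈ T supported in F.
  have hRF2 : ∀ F : Finset (Fin (r + 1)),
      Set.ncard {lam : Fin (r + 1) → ℝ |
          ((∀ i, 0 ≤ lam i ∧ lam i < 1) ∧ (∀ i ∉ F, lam i = 0)) ∧ Intg v lam}
        = (T.filter (fun μ => ∀ i ∉ F, μ i = 0)).card := by
    intro F
    rw [← Set.ncard_coe_finset]
    congr 1
    ext μ
    simp only [Finset.coe_filter, Set.mem_setOf_eq, Set.Finite.mem_toFinset, hT_def, hΛfull_def]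
    tauto
  simp only [hRF2]
  -- The LHS coefficient set.
  set Λn : Set (Fin (r + 1) → ℝ) :=
    {lam | (∀ i, 0 ≤ lam i ∧ lam i ≤ (n : ℝ)) ∧ Intg v lam} with hΛn_def
  have hΛn : Λn.Finite := by
    apply (finite_bounded v hv ((n : ℝ) + 1)).subset
    rintro lam ⟨hb, hint⟩
    exact ⟨fun i => ⟨(hb i).1, le_trans (hb i).2 (by linarith)⟩, hint⟩
  rw [Set.ncard_eq_toFinset_card _ hΛn]
  -- Fiberwise counting over the fractional-part map.
  have hmap : ∀ lam ∈ hΛn.toFinset, (fun i => Int.fract (lam i)) ∈ T := by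
    intro lam hlam
    rw [Set.Finite.mem_toFinset] at hlam
    rw [hT_def, Set.Finite.mem_toFinset]
    obtain ⟨hb, hint⟩ := hlam
    refine ⟨fun i => ⟨Int.fract_nonneg _, Int.fract_lt_one _⟩, fun j => ?_⟩
    obtain ⟨z, hz⟩ := hint j
    refine ⟨z - ∑ i, ⌊lam i⌋ * v i j, ?_⟩
    push_cast
    rw [hz]
    simp only [Int.fract, sub_mul, Finset.sum_sub_distrib]
  have hfiber : ∀ μ ∈ T,
      (hΛn.toFinset.filter (fun lam => (fun i => Int.fract (lam i)) = μ)).card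
        = ∏ i, (n + if μ i = 0 then 1 else 0) := by
    intro μ hμ
    rw [hT_def, Set.Finite.mem_toFinset] at hμ
    obtain ⟨hμb, hμint⟩ := hμ
    set D : Finset (Fin (r + 1) → ℕ) :=
      Fintype.piFinset (fun i => Finset.range (n + if μ i = 0 then 1 else 0)) with hD_def
    have hinj : Function.Injective (fun (a : Fin (r + 1) → ℕ) => (fun i => (a i : ℝ) + μ i)) := by
      intro a a' h
      funext i
      have := congrFun h i
      simp only at this
      exact_mod_cast (by linarith : (a i : ℝ) = (a' i : ℝ))
    have himg : D.image (fun (a : Fin (r + 1) → ℕ) => (fun i => (a i : ℝ) + μ i))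
        = hΛn.toFinset.filter (fun lam => (fun i => Int.fract (lam i)) = μ) := by
      ext lam
      simp only [Finset.mem_image, Finset.mem_filter, Set.Finite.mem_toFinset, hD_def,
        Fintype.mem_piFinset, Finset.mem_range, hΛn_def, Set.mem_setOf_eq]
      constructor
      · rintro ⟨a, ha, rfl⟩
        refine ⟨⟨fun i => ?_, fun j => ?_⟩, ?_⟩
        · show 0 ≤ (a i : ℝ) + μ i ∧ (a i : ℝ) + μ i ≤ (n : ℝ)
          constructor
          · exact add_nonneg (Nat.cast_nonneg _) (hμb i).1
          · have hai := ha i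
            by_cases h0 : μ i = 0
            · rw [h0, add_zero]
              rw [h0, if_pos rfl] at hai
              exact_mod_cast Nat.lt_succ_iff.mp hai
            · rw [if_neg h0, add_zero] at hai
              have h1 : (a i : ℝ) ≤ (n : ℝ) - 1 := by
                have h2 : a i + 1 ≤ n := hai
                have h3 := (Nat.cast_le (α := ℝ)).mpr h2
                push_cast at h3
                linarith
              have := (hμb i).2
              linarith
        · obtain ⟨z, hz⟩ := hμint j
          refine ⟨z + ∑ i, (a i : ℤ) * v i j, ?_⟩
          push_cast
          rw [hz, ← Finset.sum_add_distrib]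
          exact Finset.sum_congr rfl (fun i _ => by ring)
        · funext i
          have h1 : Int.fract ((a i : ℝ) + μ i) = Int.fract (μ i) := by
            rw [add_comm]
            exact_mod_cast Int.fract_add_natCast (μ i) (a i)
          rw [h1, Int.fract_eq_self.mpr ⟨(hμb i).1, (hμb i).2⟩]
      · rintro ⟨⟨hb, hint⟩, hfr⟩
        refine ⟨fun i => (⌊lam i⌋).toNat, fun i => ?_, ?_⟩
        · show (⌊lam i⌋).toNat < n + if μ i = 0 then 1 else 0
          have hfl0 : 0 ≤ ⌊lam i⌋ := Int.floor_nonneg.mpr (hb i).1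
          have hfri : Int.fract (lam i) = μ i := congrFun hfr i
          by_cases h0 : μ i = 0
          · rw [if_pos h0]
            have h1 : (⌊lam i⌋ : ℝ) ≤ (n : ℝ) := le_trans (Int.floor_le _) (hb i).2
            have h2 : ⌊lam i⌋ ≤ (n : ℤ) := by exact_mod_cast h1
            have h4 : ((⌊lam i⌋).toNat : ℤ) ≤ (n : ℤ) := by
              rw [Int.toNat_of_nonneg hfl0]; exact h2
            exact Nat.lt_succ_of_le (by exact_mod_cast h4)
          · rw [if_neg h0, add_zero]
            have hμpos : 0 < μ i := lt_of_le_of_ne (hμb i).1 (Ne.symm h0)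
            have h1 : (⌊lam i⌋ : ℝ) = lam i - μ i := by
              rw [← hfri, Int.fract]; ring
            have h2 : (⌊lam i⌋ : ℝ) < (n : ℝ) := by
              rw [h1]; have := (hb i).2; linarith
            have h3 : ⌊lam i⌋ < (n : ℤ) := by exact_mod_cast h2
            have h4 : ((⌊lam i⌋).toNat : ℤ) < (n : ℤ) := by
              rw [Int.toNat_of_nonneg hfl0]; exact h3
            exact_mod_cast h4
        · funext i
          show ((⌊lam i⌋).toNat : ℝ) + μ i = lam i
          have hfl0 : 0 ≤ ⌊lam i⌋ := Int.floor_nonneg.mpr (hb i).1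
          have hfri : Int.fract (lam i) = μ i := congrFun hfr i
          have h1 : ((⌊lam i⌋).toNat : ℝ) = (⌊lam i⌋ : ℝ) := by
            exact_mod_cast Int.toNat_of_nonneg hfl0
          rw [h1, ← hfri, Int.fract]
          ring
    rw [← himg, Finset.card_image_of_injective _ hinj, hD_def, Fintype.card_piFinset]
    exact Finset.prod_congr rfl (fun i _ => Finset.card_range _)
  rw [Finset.card_eq_sum_card_fiberwise hmap]
  -- Now both sides are sums over T; compare termwise after swapping.
  have hswap : ∑ F : Finset (Fin (r + 1)), n ^ F.card *
        (T.filter (fun μ => ∀ i ∉ F, μ i = 0)).card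
      = ∑ μ ∈ T, ∑ F : Finset (Fin (r + 1)), n ^ F.card *
          (if ∀ i ∉ F, μ i = 0 then 1 else 0) := by
    rw [Finset.sum_comm]
    apply Finset.sum_congr rfl
    intro F _
    rw [Finset.card_filter, Finset.mul_sum]
  rw [hswap]
  apply Finset.sum_congr rfl
  intro μ hμT
  rw [hfiber μ hμT]
  have hexp := Finset.prod_add (fun _ : Fin (r + 1) => n)
    (fun i => if μ i = 0 then 1 else 0) Finset.univ
  rw [hexp]
  have hpow : ∑ F : Finset (Fin (r + 1)), n ^ F.card * (if ∀ i ∉ F, μ i = 0 then 1 else 0)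
      = ∑ F ∈ (Finset.univ : Finset (Fin (r + 1))).powerset,
          n ^ F.card * (if ∀ i ∉ F, μ i = 0 then 1 else 0) := by
    rw [Finset.powerset_univ]
  rw [hpow]
  apply Finset.sum_congr rfl
  intro F _
  rw [Finset.prod_const, Finset.prod_boole]
  by_cases hc : ∀ i ∉ F, μ i = 0
  · rw [if_pos (fun i hi => hc i (Finset.mem_sdiff.mp hi).2), if_pos hc]
  · rw [if_neg _, if_neg hc]
    intro hcon
    exact hc (fun i hi => hcon i (Finset.mem_sdiff.mpr ⟨Finset.mem_univ i, hi⟩))
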